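/- arXiv:1201.1021 — 4 statements merged into one kernel-verified Lean document; each statement's English description precedes it below -/
import Mathlib

section
/- Let $F:[0,\infty) \to \mathbb{R}$ be nondecreasing with $F(0)=0$, $F(x)>0$ for $x>0$, and suppose there exist $M > 1$ and $\gamma > 1$ such that $F(Mr) \ge \gamma F(r)$ for all $r > 0$. Then for all $x > 0$, $\int_0^x \frac{F(s)}{s}\, ds \le \frac{\gamma(M-1)}{\gamma - 1} F(x)$. -/
open MeasureTheory Set

/-- Inverse doubling condition gives an integral estimate:
if `F` is nondecreasing on `[0,∞)`, `F 0 = 0`, `F x > 0` for `x > 0`, and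
`F (M r) ≥ γ F r` for all `r > 0` with `M, γ > 1`, then
`∫₀ˣ F(s)/s ds ≤ γ(M-1)/(γ-1) · F x`. -/
theorem inverse_doubling_integral (F : ℝ → ℝ) (hmono : MonotoneOn F (Ici 0))
    (hF0 : F 0 = 0) (hFpos : ∀ x : ℝ, 0 < x → 0 < F x)
    (M γ : ℝ) (hM : 1 < M) (hγ : 1 < γ)
    (hinv : ∀ r : ℝ, 0 < r → γ * F r ≤ F (M * r)) :
    ∀ x : ℝ, 0 < x →
      ∫ s in Ioc (0 : ℝ) x, F s / s ≤ (γ * (M - 1) / (γ - 1)) * F x := by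
  intro x hx
  have hM0 : (0:ℝ) < M := lt_trans one_pos hM
  have hγ0 : (0:ℝ) < γ := lt_trans one_pos hγ
  have hγ1 : (0:ℝ) < γ - 1 := by linarith
  have hFx : 0 < F x := hFpos x hx
  have hRHS : 0 ≤ (γ * (M - 1) / (γ - 1)) * F x := by
    apply mul_nonneg _ hFx.le
    apply div_nonneg _ hγ1.le
    nlinarith
  by_cases hint : IntegrableOn (fun s => F s / s) (Ioc 0 x)
  swap
  · rw [MeasureTheory.integral_undef hint]; exact hRHS
  have hpow : ∀ n : ℕ, (0:ℝ) < x / M ^ n := fun n => div_pos hx (pow_pos hM0 n)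
  have hle : ∀ n : ℕ, x / M ^ n ≤ x := by
    intro n
    exact div_le_self hx.le (one_le_pow₀ hM.le)
  have hstepeq : ∀ n : ℕ, M * (x / M ^ (n+1)) = x / M ^ n := by
    intro n
    have : M ^ (n+1) = M ^ n * M := pow_succ M n
    field_simp [this]
    ring
  have hstepineq : ∀ n : ℕ, x / M ^ (n+1) ≤ x / M ^ n := by
    intro n
    gcongr
    · exact hM.le
    · exact Nat.le_succ n
  have hdecay : ∀ n : ℕ, F (x / M ^ n) ≤ F x / γ ^ n := by
    intro n
    induction n with
    | zero => simp
    | succ n ih =>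
      have h1 : γ * F (x / M ^ (n+1)) ≤ F (M * (x / M ^ (n+1))) := hinv _ (hpow _)
      rw [hstepeq n] at h1
      have h2 := le_trans h1 ih
      rw [pow_succ γ n, ← div_div, le_div_iff₀ hγ0]
      calc F (x / M ^ (n+1)) * γ = γ * F (x / M ^ (n+1)) := mul_comm _ _
        _ ≤ F x / γ ^ n := h2
  have key : ∀ n : ℕ, ∫ s in Ioc (x / M ^ n) x, F s / s
      ≤ (M - 1) * F x * ∑ k ∈ Finset.range n, (1/γ) ^ k := by
    intro n
    induction n with
    | zero => simp
    | succ n ih =>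
      have hsub : Ioc (x / M ^ (n+1)) (x / M ^ n) ∪ Ioc (x / M ^ n) x
          = Ioc (x / M ^ (n+1)) x := Ioc_union_Ioc_eq_Ioc (hstepineq n) (hle n)
      have hi1 : IntegrableOn (fun s => F s / s) (Ioc (x / M ^ (n+1)) (x / M ^ n)) :=
        hint.mono_set (fun s hs => ⟨lt_trans (hpow (n+1)) hs.1, le_trans hs.2 (hle n)⟩)
      have hi2 : IntegrableOn (fun s => F s / s) (Ioc (x / M ^ n) x) :=
        hint.mono_set (fun s hs => ⟨lt_trans (hpow n) hs.1, hs.2⟩)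
      rw [← hsub, setIntegral_union (Set.Ioc_disjoint_Ioc_of_le le_rfl) measurableSet_Ioc hi1 hi2]
      -- bound the first piece by a constant times the length
      have hC : ∀ s ∈ Ioc (x / M ^ (n+1)) (x / M ^ n),
          ‖F s / s‖ ≤ F (x / M ^ n) / (x / M ^ (n+1)) := by
        intro s hs
        have hs0 : 0 < s := lt_trans (hpow (n+1)) hs.1
        have hFs0 : 0 ≤ F s := (hFpos s hs0).le
        have hFs : F s ≤ F (x / M ^ n) :=
          hmono hs0.le (hpow n).le hs.2
        rw [Real.norm_eq_abs, abs_of_nonneg (by positivity)]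
        exact div_le_div₀ (le_trans hFs0 hFs) hFs (hpow (n+1)) hs.1.le
      have hvol : (volume (Ioc (x / M ^ (n+1)) (x / M ^ n))).toReal
          = x / M ^ n - x / M ^ (n+1) := by
        rw [Real.volume_Ioc, ENNReal.toReal_ofReal (by linarith [hstepineq n])]
      have hnorm := norm_setIntegral_le_of_norm_le_const
        (C := F (x / M ^ n) / (x / M ^ (n+1)))
        (by rw [Real.volume_Ioc]; exact ENNReal.ofReal_lt_top) hC
      have hbound1 : ∫ s in Ioc (x / M ^ (n+1)) (x / M ^ n), F s / s
          ≤ (M - 1) * F (x / M ^ n) := by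
        have h1 : ∫ s in Ioc (x / M ^ (n+1)) (x / M ^ n), F s / s
            ≤ F (x / M ^ n) / (x / M ^ (n+1)) * (x / M ^ n - x / M ^ (n+1)) := by
          calc ∫ s in Ioc (x / M ^ (n+1)) (x / M ^ n), F s / s
              ≤ ‖∫ s in Ioc (x / M ^ (n+1)) (x / M ^ n), F s / s‖ := by
                rw [Real.norm_eq_abs]; exact le_abs_self _
            _ ≤ _ := by rw [← hvol]; exact hnorm
        have h2 : F (x / M ^ n) / (x / M ^ (n+1)) * (x / M ^ n - x / M ^ (n+1))
            = (M - 1) * F (x / M ^ n) := by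
          have ha : (0:ℝ) < x / M ^ (n+1) := hpow (n+1)
          have hb : x / M ^ n = M * (x / M ^ (n+1)) := (hstepeq n).symm
          rw [hb]
          field_simp
        linarith
      have hdec : (M - 1) * F (x / M ^ n) ≤ (M - 1) * F x * (1/γ) ^ n := by
        have h3 : F (x / M ^ n) ≤ F x * (1/γ) ^ n := by
          have := hdecay n
          rw [div_pow, one_pow]
          rw [div_eq_mul_inv] at this ⊢
          simpa [div_eq_mul_inv] using this
        nlinarith [hFpos _ (hpow n), pow_pos hγ0 n]
      rw [Finset.sum_range_succ]
      have : (M - 1) * F x * (∑ k ∈ Finset.range n, (1/γ) ^ k + (1/γ) ^ n)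
          = (M - 1) * F x * ∑ k ∈ Finset.range n, (1/γ) ^ k + (M - 1) * F x * (1/γ) ^ n := by
        ring
      rw [this]
      linarith
  -- pass to the limit
  have hmonoS : Monotone (fun n : ℕ => Ioc (x / M ^ n) x) := by
    intro n m hnm s hs
    refine ⟨lt_of_le_of_lt ?_ hs.1, hs.2⟩
    gcongr
    exact hM.le
  have hUnion : ⋃ n : ℕ, Ioc (x / M ^ n) x = Ioc 0 x := by
    ext s
    simp only [mem_iUnion, mem_Ioc]
    constructor
    · rintro ⟨n, h1, h2⟩
      exact ⟨lt_trans (hpow n) h1, h2⟩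
    · rintro ⟨hs0, hsx⟩
      obtain ⟨n, hn⟩ := pow_unbounded_of_one_lt (x / s) hM
      refine ⟨n, ?_, hsx⟩
      rw [div_lt_iff₀ (pow_pos hM0 n)]
      have := (div_lt_iff₀ hs0).mp hn
      nlinarith
  have htend := MeasureTheory.tendsto_setIntegral_of_monotone
      (fun n => measurableSet_Ioc) hmonoS (hUnion ▸ hint)
  rw [hUnion] at htend
  refine le_of_tendsto htend (Filter.Eventually.of_forall fun n => ?_)
  have hsum : ∑ k ∈ Finset.range n, (1/γ) ^ k ≤ γ / (γ - 1) := by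
    have hrpos : (0:ℝ) < 1/γ := by positivity
    have hrlt : (1:ℝ)/γ < 1 := by rw [div_lt_one hγ0]; exact hγ
    have h1r : (0:ℝ) < 1 - 1/γ := by linarith
    rw [geom_sum_eq (ne_of_lt hrlt) n]
    have e1 : ((1/γ) ^ n - 1) / (1/γ - 1) = (1 - (1/γ) ^ n) / (1 - 1/γ) := by
      rw [← neg_div_neg_eq]; ring_nf
    have e2 : γ / (γ - 1) = 1 / (1 - 1/γ) := by field_simp
    rw [e1, e2]
    gcongr
    nlinarith [pow_pos hrpos n]
  calc ∫ s in Ioc (x / M ^ n) x, F s / s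
      ≤ (M - 1) * F x * ∑ k ∈ Finset.range n, (1/γ) ^ k := key n
    _ ≤ (M - 1) * F x * (γ / (γ - 1)) := by
        have hMF : 0 ≤ (M - 1) * F x := by nlinarith
        exact mul_le_mul_of_nonneg_left hsum hMF
    _ = (γ * (M - 1) / (γ - 1)) * F x := by
        field_simp
end

section
/- Let $\tilde\nu$ be a positive regular Borel measure on $[0,\infty)$ satisfying the doubling condition with constant $R$ and with $\tilde\nu(\{0\})=0$, and $\tilde\nu[0,t)>0$ for $t>0$, $\tilde\nu[0,t)\to\infty$ as $t\to\infty$. Define $F(r)=\tilde\nu[0,r)$ and for $n\in\mathbb{Z}$ let $a_n = \sup\{r \ge 0 : F(r) \le (2R)^{2n}\}$. Then $(2R)^{2n} \ge F(a_n) \ge \frac{1}{R}(2R)^{2n}$ for all $n$. -/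
open MeasureTheory Set

/-- For a doubling measure `ν` on `[0,∞)` with `ν({0}) = 0`, the sequence
`a_n = sup { r ≥ 0 : ν[0,r) ≤ (2R)^(2n) }` satisfies
`(2R)^(2n) ≥ ν[0, a_n) ≥ (2R)^(2n) / R`. -/
theorem F_at_an_bounds (ν : Measure ℝ) (R : NNReal) (hR : 1 ≤ R)
    (hdb : ∀ t : ℝ, 0 < t → ν (Ico 0 (2 * t)) ≤ (R : ENNReal) * ν (Ico 0 t))
    (hfin : ∀ t : ℝ, ν (Ico 0 t) < ⊤)
    (h0 : ν {0} = 0)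
    (hpos : ∀ t : ℝ, 0 < t → 0 < ν (Ico 0 t))
    (htop : Filter.Tendsto (fun t : ℝ => ν (Ico 0 t)) Filter.atTop (nhds ⊤))
    (a : ℤ → ℝ)
    (ha : ∀ n : ℤ, a n = sSup {r : ℝ | 0 ≤ r ∧ ν (Ico 0 r) ≤ (2 * (R : ENNReal)) ^ (2 * n)}) :
    ∀ n : ℤ, ν (Ico 0 (a n)) ≤ (2 * (R : ENNReal)) ^ (2 * n) ∧
      (2 * (R : ENNReal)) ^ (2 * n) / (R : ENNReal) ≤ ν (Ico 0 (a n)) := by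
  intro n
  set c : ENNReal := (2 * (R : ENNReal)) ^ (2 * n) with hc
  have hR0 : (R : ENNReal) ≠ 0 := by
    simp only [ne_eq, ENNReal.coe_eq_zero]
    intro h
    rw [h] at hR
    exact absurd hR (by norm_num)
  have hb0 : (2 * (R : ENNReal)) ≠ 0 := by
    simp [hR0]
  have hbt : (2 * (R : ENNReal)) ≠ ⊤ := by
    exact ENNReal.mul_ne_top (by norm_num) ENNReal.coe_ne_top
  have hc0 : 0 < c := ENNReal.zpow_pos hb0 hbt _
  have hct : c < ⊤ := ENNReal.zpow_lt_top hb0 hbt _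
  set S : Set ℝ := {r : ℝ | 0 ≤ r ∧ ν (Ico 0 r) ≤ c} with hS
  have haS : a n = sSup S := ha n
  have hS0 : (0 : ℝ) ∈ S := by
    constructor
    · exact le_refl 0
    · simp
  have hSne : S.Nonempty := ⟨0, hS0⟩
  -- S is bounded above
  obtain ⟨T, hT⟩ : ∃ T : ℝ, ∀ t ≥ T, c < ν (Ico 0 t) := by
    have := htop.eventually (eventually_gt_nhds hct)
    exact Filter.eventually_atTop.mp this
  have hbdd : BddAbove S := by
    refine ⟨max T 0, fun r hr => ?_⟩
    by_contra hcon
    push_neg at hcon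
    have h1 : T ≤ r := le_of_lt (lt_of_le_of_lt (le_max_left _ _) hcon)
    exact absurd hr.2 (not_le.mpr (hT r h1))
  -- a n is positive
  have hdiv : ∀ i j : ℕ, i ≤ j → (1:ℝ)/(j+1) ≤ 1/(i+1) := fun i j hij => by
    apply one_div_le_one_div_of_le (by positivity)
    exact_mod_cast Nat.succ_le_succ hij
  have hapos : 0 < a n := by
    -- find small t with ν (Ico 0 t) ≤ c
    have hmeas : ∀ k : ℕ, NullMeasurableSet (Ico (0:ℝ) (1 / (k + 1))) ν :=
      fun k => measurableSet_Ico.nullMeasurableSet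
    have hdir : Directed (· ⊇ ·) (fun k : ℕ => Ico (0:ℝ) (1 / (k + 1))) := by
      apply Antitone.directed_ge
      intro i j hij
      exact Ico_subset_Ico_right (hdiv i j hij)
    have hinter : (⋂ k : ℕ, Ico (0:ℝ) (1 / (k + 1))) = {0} := by
      ext x
      simp only [mem_iInter, mem_Ico, mem_singleton_iff]
      constructor
      · intro h
        by_contra hx
        have hx0 : 0 < x := lt_of_le_of_ne (h 0).1 (Ne.symm hx)
        obtain ⟨k, hk⟩ := exists_nat_one_div_lt hx0
        exact absurd (h k).2 (not_lt.mpr (le_of_lt hk))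
      · rintro rfl
        intro k
        exact ⟨le_refl 0, by positivity⟩
    have hinf : (⨅ k : ℕ, ν (Ico (0:ℝ) (1 / (k + 1)))) = 0 := by
      rw [← hdir.measure_iInter hmeas ⟨0, (hfin _).ne⟩, hinter, h0]
    have : ∃ k : ℕ, ν (Ico (0:ℝ) (1 / (k + 1))) < c := by
      rw [← iInf_lt_iff, hinf]; exact hc0
    obtain ⟨k, hk⟩ := this
    have hmem : (1 / ((k:ℝ) + 1)) ∈ S := ⟨by positivity, le_of_lt hk⟩
    calc (0:ℝ) < 1 / ((k:ℝ) + 1) := by positivity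
      _ ≤ sSup S := le_csSup hbdd hmem
      _ = a n := haS.symm
  constructor
  · -- upper bound
    have hunion : Ico (0:ℝ) (a n) = ⋃ k : ℕ, Ico (0:ℝ) (a n - 1 / (k + 1)) := by
      ext x
      simp only [mem_iUnion, mem_Ico]
      constructor
      · rintro ⟨hx0, hxa⟩
        obtain ⟨k, hk⟩ := exists_nat_one_div_lt (sub_pos.mpr hxa)
        exact ⟨k, hx0, by linarith⟩
      · rintro ⟨k, hx0, hxk⟩
        have : (0:ℝ) < 1 / ((k:ℝ) + 1) := by positivity
        exact ⟨hx0, by linarith⟩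
    rw [hunion]
    have hmono : Monotone (fun k : ℕ => Ico (0:ℝ) (a n - 1 / (k + 1))) := by
      intro i j hij
      apply Ico_subset_Ico_right
      have := hdiv i j hij
      linarith
    rw [hmono.directed_le.measure_iUnion]
    apply iSup_le
    intro k
    have hlt : a n - 1 / ((k:ℝ) + 1) < sSup S := by
      rw [← haS]
      have : (0:ℝ) < 1 / ((k:ℝ) + 1) := by positivity
      linarith
    obtain ⟨s, hsS, hs⟩ := exists_lt_of_lt_csSup hSne hlt
    calc ν (Ico 0 (a n - 1 / ((k:ℝ) + 1))) ≤ ν (Ico 0 s) :=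
          measure_mono (Ico_subset_Ico_right (le_of_lt hs))
      _ ≤ c := hsS.2
  · -- lower bound
    have h2a : ¬ (2 * a n ∈ S) := by
      intro hmem
      have := le_csSup hbdd hmem
      rw [← haS] at this
      linarith
    have h2a' : c < ν (Ico 0 (2 * a n)) := by
      rw [hS] at h2a
      simp only [mem_setOf_eq, not_and, not_le] at h2a
      exact h2a (by linarith)
    have hdbl := hdb (a n) hapos
    rw [ENNReal.div_le_iff hR0 ENNReal.coe_ne_top]
    calc c ≤ ν (Ico 0 (2 * a n)) := le_of_lt h2a'
      _ ≤ (R : ENNReal) * ν (Ico 0 (a n)) := hdbl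
      _ = ν (Ico 0 (a n)) * (R : ENNReal) := mul_comm _ _
end

section
/- With the sequence $(a_n)$ defined by $a_n = \sup\{r \ge 0 : F(r) \le (2R)^{2n}\}$ for a doubling measure $\tilde\nu$ with constant $R$ (and $F(r)=\tilde\nu[0,r)$), one has $a_{n+1} \ge 2 a_n$ for all $n$, and hence $(a_{n+1}-a_n)/a_{n+1} \ge 1/2$. -/
open MeasureTheory Set

/-- For a doubling measure `ν` with constant `R`, the sequence
`a_n = sup { r ≥ 0 : ν[0,r) ≤ (2R)^(2n) }` satisfies `a_{n+1} ≥ 2 a_n`, and hence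
`(a_{n+1} - a_n)/a_{n+1} ≥ 1/2`. -/
theorem an_growth (ν : Measure ℝ) (R : NNReal) (hR : 1 ≤ R)
    (hdb : ∀ t : ℝ, 0 < t → ν (Ico 0 (2 * t)) ≤ (R : ENNReal) * ν (Ico 0 t))
    (hfin : ∀ t : ℝ, ν (Ico 0 t) < ⊤)
    (h0 : ν {0} = 0)
    (hpos : ∀ t : ℝ, 0 < t → 0 < ν (Ico 0 t))
    (htop : Filter.Tendsto (fun t : ℝ => ν (Ico 0 t)) Filter.atTop (nhds ⊤))
    (a : ℤ → ℝ)
    (ha : ∀ n : ℤ, a n = sSup {r : ℝ | 0 ≤ r ∧ ν (Ico 0 r) ≤ (2 * (R : ENNReal)) ^ (2 * n)})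
    (hapos : ∀ n : ℤ, 0 < a n)
    (hbound : ∀ n : ℤ, ν (Ico 0 (a n)) ≤ (2 * (R : ENNReal)) ^ (2 * n) ∧
      (2 * (R : ENNReal)) ^ (2 * n) / (R : ENNReal) ≤ ν (Ico 0 (a n))) :
    ∀ n : ℤ, 2 * a n ≤ a (n + 1) ∧ (1 : ℝ) / 2 ≤ (a (n + 1) - a n) / a (n + 1) := by
  intro n
  have hR1 : (1 : ENNReal) ≤ (R : ENNReal) := by exact_mod_cast hR
  have h2R0 : (2 * (R : ENNReal)) ≠ 0 := by
    simp only [ne_eq, mul_eq_zero, not_or]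
    exact ⟨two_ne_zero, fun h => by simp [h] at hR1⟩
  have h2Rt : (2 * (R : ENNReal)) ≠ ⊤ := by
    exact ENNReal.mul_ne_top (by norm_num) (ENNReal.coe_ne_top)
  have hMlt : (2 * (R : ENNReal)) ^ (2 * (n + 1)) < ⊤ := by
    exact ENNReal.zpow_lt_top h2R0 h2Rt _
  have hmain : 2 * a n ≤ a (n + 1) := by
    obtain ⟨T, hT⟩ := (htop.eventually (eventually_gt_nhds hMlt)).exists
    have hbdd : BddAbove {r : ℝ | 0 ≤ r ∧
        ν (Ico 0 r) ≤ (2 * (R : ENNReal)) ^ (2 * (n + 1))} := by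
      refine ⟨T, fun r hr => ?_⟩
      by_contra hc
      push_neg at hc
      have hmono : ν (Ico 0 T) ≤ ν (Ico 0 r) := measure_mono (Ico_subset_Ico le_rfl hc.le)
      exact absurd (hmono.trans hr.2) (not_le.mpr hT)
    have hRle : (R : ENNReal) ≤ (2 * R) * (2 * R) := by
      have h1 : (1 : ENNReal) ≤ 2 * R := le_trans hR1 (le_mul_of_one_le_left zero_le one_le_two)
      calc (R : ENNReal) = R * 1 := (mul_one _).symm
        _ ≤ (2 * R) * (2 * R) := by
            exact mul_le_mul' (le_mul_of_one_le_left zero_le one_le_two) h1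
    have hmem : 2 * a n ∈ {r : ℝ | 0 ≤ r ∧
        ν (Ico 0 r) ≤ (2 * (R : ENNReal)) ^ (2 * (n + 1))} := by
      constructor
      · linarith [(hapos n).le]
      · calc ν (Ico 0 (2 * a n)) ≤ (R : ENNReal) * ν (Ico 0 (a n)) := hdb _ (hapos n)
          _ ≤ (R : ENNReal) * (2 * (R : ENNReal)) ^ (2 * n) :=
              mul_le_mul_right (hbound n).1 _
          _ ≤ ((2 * R) * (2 * R)) * (2 * (R : ENNReal)) ^ (2 * n) :=
              mul_le_mul_left hRle _
          _ = (2 * (R : ENNReal)) ^ (2 * (n + 1)) := by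
              rw [show 2 * (n + 1) = 2 * n + 1 + 1 by ring, ENNReal.zpow_add h2R0 h2Rt,
                ENNReal.zpow_add h2R0 h2Rt, zpow_one]
              ring
    rw [ha (n + 1)]
    exact le_csSup hbdd hmem
  refine ⟨hmain, ?_⟩
  rw [le_div_iff₀ (hapos (n + 1))]
  linarith
end

section
/- Let $\mu$ be a positive regular Borel measure on $\mathbb{C}_+$, $1 \le p, q < \infty$ with $p > 1$, and suppose the Laplace--Carleson embedding $\mathcal{L}: L^p(0,\infty) \to L^q(\mathbb{C}_+,\mu)$ is bounded with norm $M$. Then there is a constant $C_{p,q}$ (depending only on $p$, $q$, $M$) such that $\mu(Q_I) \le C_{p,q} |I|^{q/p'}$ for every interval $I \subset i\mathbb{R}$, where $p' = p/(p-1)$. -/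
open MeasureTheory Set Real Complex Filter Topology

/-- The Carleson square over the interval of centre `c` and length `h` on the
imaginary axis. -/
def carlesonSquare (c h : ℝ) : Set ℂ :=
  {z : ℂ | 0 < z.re ∧ z.re < h ∧ |z.im - c| ≤ h / 2}

lemma integral_cexp_Ioi {w : ℂ} (hw : 0 < w.re) :
    ∫ t in Ioi (0 : ℝ), Complex.exp (-(t : ℂ) * w) = 1 / w := by
  have hw0 : w ≠ 0 := fun h => by simp [h] at hw
  have hnorm : ∀ t : ℝ, ‖Complex.exp (-(t : ℂ) * w)‖ = Real.exp (-w.re * t) := by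
    intro t
    rw [Complex.norm_exp]
    congr 1
    simp [Complex.mul_re]
    ring
  have hint : IntegrableOn (fun t : ℝ => Complex.exp (-(t : ℂ) * w)) (Ioi 0) := by
    refine Integrable.mono' (exp_neg_integrableOn_Ioi 0 hw) ?_ ?_
    · exact (Complex.continuous_exp.comp
        ((continuous_ofReal.neg.mul continuous_const))).aestronglyMeasurable
    · filter_upwards with t
      rw [hnorm t]
  have hderiv : ∀ x ∈ Ici (0 : ℝ),
      HasDerivAt (fun t : ℝ => Complex.exp (-(t : ℂ) * w) / -w)
        (Complex.exp (-(x : ℂ) * w)) x := by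
    intro x _
    have h1 : HasDerivAt (fun t : ℝ => -(t : ℂ) * w) (-w) x := by
      simpa using (Complex.ofRealCLM.hasDerivAt (x := x)).neg.mul_const w
    have h3 := (h1.cexp).div_const (-w)
    have : Complex.exp (-(x : ℂ) * w) * -w / -w = Complex.exp (-(x : ℂ) * w) := by
      field_simp
    rwa [this] at h3
  have htend : Tendsto (fun t : ℝ => Complex.exp (-(t : ℂ) * w) / -w) atTop (𝓝 0) := by
    have h0 : Tendsto (fun t : ℝ => Complex.exp (-(t : ℂ) * w)) atTop (𝓝 0) := by
      rw [tendsto_zero_iff_norm_tendsto_zero]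
      have : Tendsto (fun t : ℝ => Real.exp (-w.re * t)) atTop (𝓝 0) :=
        Real.tendsto_exp_atBot.comp
          ((tendsto_const_mul_atBot_of_neg (by linarith : -w.re < 0)).mpr tendsto_id)
      exact this.congr fun t => (hnorm t).symm
    simpa using h0.div_const (-w)
  have key := integral_Ioi_of_hasDerivAt_of_tendsto' hderiv hint htend
  rw [key]
  simp [div_neg]

lemma integral_exp_neg_mul_Ioi'' {b : ℝ} (hb : 0 < b) :
    ∫ t in Ioi (0 : ℝ), Real.exp (-b * t) = 1 / b := by
  have hb' : -b < 0 := by linarith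
  have hderiv : ∀ x ∈ Ici (0 : ℝ),
      HasDerivAt (fun t : ℝ => Real.exp (-b * t) / -b) (Real.exp (-b * x)) x := by
    intro x _
    have h1 : HasDerivAt (fun t : ℝ => -b * t) (-b) x := by
      simpa using (hasDerivAt_id x).const_mul (-b)
    have h2 := (h1.exp).div_const (-b)
    rwa [mul_div_cancel_right₀ _ (neg_ne_zero.mpr hb.ne')] at h2
  have htend : Filter.Tendsto (fun t : ℝ => Real.exp (-b * t) / -b) atTop (𝓝 0) := by
    have h0 : Filter.Tendsto (fun t : ℝ => Real.exp (-b * t)) atTop (𝓝 0) :=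
      Real.tendsto_exp_atBot.comp ((tendsto_const_mul_atBot_of_neg hb').mpr tendsto_id)
    simpa using h0.div_const (-b)
  have key := integral_Ioi_of_hasDerivAt_of_tendsto' hderiv (exp_neg_integrableOn_Ioi 0 hb) htend
  rw [key]
  simp [div_neg]

/-- If the Laplace–Carleson embedding `ℒ : L^p(0,∞) → L^q(ℂ₊, μ)` is bounded
with norm `M`, then `μ(Q_I) ≤ C_{p,q} |I|^{q/p'}` for every interval
`I ⊂ iℝ`, where `p' = p/(p-1)` and `C_{p,q}` depends only on `p, q, M`. -/
theorem laplace_carleson_necessary (μ : Measure ℂ) (p q M : ℝ)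
    (hp : 1 < p) (hq : 1 ≤ q) (hM : 0 < M)
    (hbdd : ∀ f : ℝ → ℂ,
      (∫⁻ z, ((‖∫ t in Ioi (0 : ℝ), Complex.exp (-(t : ℂ) * z) * f t‖₊ : ENNReal)) ^ q ∂μ) ^ (1 / q)
        ≤ ENNReal.ofReal M * (∫⁻ t in Ioi (0 : ℝ), ((‖f t‖₊ : ENNReal)) ^ p) ^ (1 / p)) :
    ∃ C : ℝ, 0 < C ∧ ∀ c h : ℝ, 0 < h →
      μ (carlesonSquare c h) ≤ ENNReal.ofReal (C * h ^ (q * (p - 1) / p)) := by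
  have hp0 : (0 : ℝ) < p := by linarith
  have hq0 : (0 : ℝ) < q := by linarith
  refine ⟨2 ^ q * M ^ q * (2 / p) ^ (q / p), by positivity, ?_⟩
  intro c h hh
  set Q := carlesonSquare c h with hQdef
  have hQmeas : MeasurableSet Q := by
    have h1 : MeasurableSet {z : ℂ | 0 < z.re} :=
      measurableSet_lt measurable_const Complex.measurable_re
    have h2 : MeasurableSet {z : ℂ | z.re < h} :=
      measurableSet_lt Complex.measurable_re measurable_const
    have h3 : MeasurableSet {z : ℂ | |z.im - c| ≤ h / 2} := by
      refine measurableSet_le ?_ measurable_const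
      exact (Complex.measurable_im.sub measurable_const).abs
    have : Q = {z : ℂ | 0 < z.re} ∩ ({z : ℂ | z.re < h} ∩ {z : ℂ | |z.im - c| ≤ h / 2}) := by
      ext z; simp [hQdef, carlesonSquare, and_assoc]
    rw [this]
    exact h1.inter (h2.inter h3)
  -- the test function
  set w : ℂ := ⟨h / 2, -c⟩ with hwdef
  have hwre : w.re = h / 2 := rfl
  have hwim : w.im = -c := rfl
  set f : ℝ → ℂ := fun t => Complex.exp (-(t : ℂ) * w) with hfdef
  -- Step C : compute the right-hand side
  have hb : (0 : ℝ) < p * (h / 2) := by positivity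
  have stepC : ∫⁻ t in Ioi (0 : ℝ), ((‖f t‖₊ : ENNReal)) ^ p
      = ENNReal.ofReal (2 / (p * h)) := by
    have hnorm : ∀ t : ℝ, ((‖f t‖₊ : ENNReal)) ^ p
        = ENNReal.ofReal (Real.exp (-(p * (h / 2)) * t)) := by
      intro t
      rw [← enorm_eq_nnnorm, ← ofReal_norm, hfdef]
      simp only
      rw [Complex.norm_exp,
        ENNReal.ofReal_rpow_of_pos (Real.exp_pos _), ← Real.exp_mul]
      congr 2
      simp only [Complex.neg_re, Complex.neg_im, Complex.mul_re, Complex.ofReal_re,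
        Complex.ofReal_im, hwre, hwim]
      ring
    simp_rw [hnorm]
    rw [← ofReal_integral_eq_lintegral_ofReal (exp_neg_integrableOn_Ioi 0 hb)
        (ae_of_all _ fun t => (Real.exp_pos _).le),
      integral_exp_neg_mul_Ioi'' hb]
    congr 1
    rw [div_eq_div_iff (by positivity) (by positivity)]
    ring
  -- Step A : pointwise lower bound on the Carleson square
  have hL : ∀ z ∈ Q, ENNReal.ofReal (1 / (2 * h))
      ≤ ((‖∫ t in Ioi (0 : ℝ), Complex.exp (-(t : ℂ) * z) * f t‖₊ : ENNReal)) := by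
    intro z hz
    obtain ⟨hz1, hz2, hz3⟩ := hz
    have hzw : 0 < (z + w).re := by
      simp only [Complex.add_re, hwre]
      linarith
    have hint : ∫ t in Ioi (0 : ℝ), Complex.exp (-(t : ℂ) * z) * f t = 1 / (z + w) := by
      rw [← integral_cexp_Ioi hzw]
      refine setIntegral_congr_fun measurableSet_Ioi fun t _ => ?_
      rw [hfdef]
      simp only
      rw [← Complex.exp_add]
      ring_nf
    rw [hint, ← enorm_eq_nnnorm, ← ofReal_norm]
    apply ENNReal.ofReal_le_ofReal
    have habs : ‖z + w‖ ≤ 2 * h := by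
      calc ‖z + w‖ ≤ |(z + w).re| + |(z + w).im| := Complex.norm_le_abs_re_add_abs_im _
        _ ≤ 2 * h := by
            simp only [Complex.add_re, Complex.add_im, hwre, hwim]
            have h1 : |z.re + h / 2| ≤ h + h / 2 := by
              rw [abs_of_pos (by linarith)]; linarith
            have h2 : |z.im + -c| ≤ h / 2 := by rw [← sub_eq_add_neg]; exact hz3
            linarith
    have hzw0 : (0 : ℝ) < ‖z + w‖ := by
      rw [norm_pos_iff]
      intro hcontra
      rw [hcontra] at hzw
      simp at hzw
    rw [norm_div, norm_one]
    exact one_div_le_one_div_of_le hzw0 habs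
  -- Combine
  set A := ENNReal.ofReal (1 / (2 * h)) with hAdef
  set B := ENNReal.ofReal (2 / (p * h)) with hBdef
  have hApos : (0 : ℝ) < 1 / (2 * h) := by positivity
  have hAne0 : A ≠ 0 := by
    rw [hAdef]; simpa using hApos
  have hAnetop : A ≠ ⊤ := ENNReal.ofReal_ne_top
  have key1 : A ^ q * μ Q ≤ ∫⁻ z,
      ((‖∫ t in Ioi (0 : ℝ), Complex.exp (-(t : ℂ) * z) * f t‖₊ : ENNReal)) ^ q ∂μ := by
    calc A ^ q * μ Q = ∫⁻ _ in Q, A ^ q ∂μ := (setLIntegral_const _ _).symm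
      _ ≤ ∫⁻ z in Q,
          ((‖∫ t in Ioi (0 : ℝ), Complex.exp (-(t : ℂ) * z) * f t‖₊ : ENNReal)) ^ q ∂μ :=
          setLIntegral_mono' hQmeas fun z hz => ENNReal.rpow_le_rpow (hL z hz) hq0.le
      _ ≤ _ := setLIntegral_le_lintegral _ _
  have key2 : (∫⁻ z,
      ((‖∫ t in Ioi (0 : ℝ), Complex.exp (-(t : ℂ) * z) * f t‖₊ : ENNReal)) ^ q ∂μ)
      ≤ (ENNReal.ofReal M * B ^ (1 / p)) ^ q := by
    have hb := hbdd f
    rw [stepC] at hb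
    have hpow : ∀ x : ENNReal, (x ^ (1 / q)) ^ q = x := by
      intro x
      rw [← ENNReal.rpow_mul, one_div_mul_cancel hq0.ne', ENNReal.rpow_one]
    have := ENNReal.rpow_le_rpow hb hq0.le
    rwa [hpow] at this
  have hAq0 : A ^ q ≠ 0 := by
    simp [ENNReal.rpow_eq_zero_iff, hAne0, hAnetop]
  have hAqtop : A ^ q ≠ ⊤ := ENNReal.rpow_ne_top_of_nonneg hq0.le hAnetop
  have hmain : μ Q ≤ (A ^ q)⁻¹ * (ENNReal.ofReal M * B ^ (1 / p)) ^ q := by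
    have := mul_le_mul_of_nonneg_left (key1.trans key2) (zero_le (a := (A ^ q)⁻¹))
    rwa [← mul_assoc, ENNReal.inv_mul_cancel hAq0 hAqtop, one_mul] at this
  refine hmain.trans ?_
  -- convert everything to ofReal
  have e1 : (A ^ q)⁻¹ = ENNReal.ofReal ((2 * h) ^ q) := by
    rw [hAdef, ENNReal.ofReal_rpow_of_pos hApos, ← ENNReal.ofReal_inv_of_pos (by positivity)]
    congr 1
    rw [one_div, ← Real.inv_rpow (by positivity), inv_inv]
  have hBpos : (0 : ℝ) < 2 / (p * h) := by positivity
  have e2 : (ENNReal.ofReal M * B ^ (1 / p)) ^ q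
      = ENNReal.ofReal (M ^ q * (2 / (p * h)) ^ (1 / p * q)) := by
    rw [ENNReal.mul_rpow_of_ne_top ENNReal.ofReal_ne_top
      (ENNReal.rpow_ne_top_of_nonneg (by positivity) ENNReal.ofReal_ne_top),
      ENNReal.ofReal_rpow_of_pos hM, ← ENNReal.rpow_mul,
      ENNReal.ofReal_rpow_of_pos hBpos, ← ENNReal.ofReal_mul (by positivity)]
  rw [e1, e2, ← ENNReal.ofReal_mul (by positivity)]
  apply ENNReal.ofReal_le_ofReal
  apply le_of_eq
  -- real arithmetic with rpow
  have hexp : q * (p - 1) / p = q - 1 / p * q := by field_simp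
  rw [hexp, Real.rpow_sub hh,
    Real.mul_rpow (by norm_num : (0:ℝ) ≤ 2) hh.le,
    show 2 / (p * h) = (2 / p) / h by rw [div_div],
    Real.div_rpow (by positivity) hh.le]
  rw [show q / p = 1 / p * q by ring]
  field_simp
end
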